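/- Degree distribution in the links and Z-stars SUGM: fix integers n > Z ≥ 2 and parameters β_L, β_Z ∈ [0,1]. Suppose each of the C(n,2) links forms independently with probability β_L and each of the n·C(n−1,Z) possible Z-stars (an ordered choice of a center node and a set of Z leaves, creating the Z center–leaf edges) forms independently with probability β_Z; the observed graph has an edge between i and j iff the link ij formed directly or some formed star has one of i,j as center and the other as leaf. Then for every node i and every integer d with 0 ≤ d < Z, the probability that i has degree exactly d in the observed graph equals C(n−1,d)·π^d·(1−π)^{n−1−d}·(1−β_Z)^{C(n−1,Z)}, where π = β_L + (1−β_L)(1−(1−β_Z)^{C(n−2,Z−1)}). -/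

import Mathlib

open MeasureTheory

/-- A Bernoulli measure on `Bool` with success probability `p`. -/
noncomputable def bern (p : ℝ) : Measure Bool :=
  ENNReal.ofReal p • Measure.dirac true + ENNReal.ofReal (1 - p) • Measure.dirac false

/-- Sample space of the links and `Z`-stars SUGM on `n` nodes: one Boolean coordinate for
every potential direct link (a set of nodes, relevant when it has two elements) and one
for every potential star (a center node together with a set of leaves, relevant when the
set has `Z` elements not containing the center). -/
abbrev StarOmega (n : ℕ) := (Finset (Fin n) ⊕ Fin n × Finset (Fin n)) → Bool

/-- The links and `Z`-stars SUGM: every link coordinate is an independent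
Bernoulli(`βL`) and every star coordinate an independent Bernoulli(`βZ`). -/
noncomputable def starSugm (n : ℕ) (βL βZ : ℝ) : Measure (StarOmega n) :=
  Measure.pi fun x => Sum.elim (fun _ => bern βL) (fun _ => bern βZ) x

/-- The observed graph of the links and `Z`-stars model: `i` and `j` are adjacent iff the
direct link `{i,j}` formed, or some formed `Z`-star has one of them as center and the
other as a leaf. -/
def starEdge {n : ℕ} (Z : ℕ) (ω : StarOmega n) (i j : Fin n) : Bool :=
  ω (Sum.inl {i, j}) ||
    decide (∃ s : Finset (Fin n),
      s.card = Z ∧ i ∉ s ∧ j ∈ s ∧ ω (Sum.inr (i, s)) = true) ||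
    decide (∃ s : Finset (Fin n),
      s.card = Z ∧ j ∉ s ∧ i ∈ s ∧ ω (Sum.inr (j, s)) = true)

/-- The degree of node `i` in the observed graph. -/
def starDegree {n : ℕ} (Z : ℕ) (ω : StarOmega n) (i : Fin n) : ℕ :=
  (Finset.univ.filter fun j => j ≠ i ∧ starEdge Z ω i j = true).card

/- helpers -/

open ENNReal

noncomputable def wB (q : ℝ) (b : Bool) : ℝ≥0∞ :=
  if b then ENNReal.ofReal q else ENNReal.ofReal (1 - q)

lemma bern_singleton (q : ℝ) (b : Bool) : bern q {b} = wB q b := by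
  cases b <;>
    simp [bern, wB, Measure.add_apply, Measure.smul_apply,
      Measure.dirac_apply' _ (measurableSet_singleton _)]

@[simp] lemma wB_true (q : ℝ) : wB q true = ENNReal.ofReal q := rfl
@[simp] lemma wB_false (q : ℝ) : wB q false = ENNReal.ofReal (1 - q) := rfl

lemma wB_total {q : ℝ} (hq : q ∈ Set.Icc (0:ℝ) 1) : wB q true + wB q false = 1 := by
  rw [wB_true, wB_false, ← ENNReal.ofReal_add hq.1 (by linarith [hq.2]), ← ENNReal.ofReal_one]
  norm_num

instance bern_finite (q : ℝ) : IsFiniteMeasure (bern q) := by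
  constructor
  simp only [bern, Measure.add_apply, Measure.smul_apply, smul_eq_mul, measure_univ, mul_one]
  exact ENNReal.add_lt_top.mpr ⟨ENNReal.ofReal_lt_top, ENNReal.ofReal_lt_top⟩

lemma measure_pi_bern_apply {K : Type*} [Fintype K] [DecidableEq K] (p : K → ℝ)
    (S : Set (K → Bool)) [DecidablePred (· ∈ S)] :
    Measure.pi (fun x => bern (p x)) S
      = ∑ ω : K → Bool, if ω ∈ S then ∏ x, wB (p x) (ω x) else 0 := by
  have hsing : ∀ ω : K → Bool, Measure.pi (fun x => bern (p x)) {ω} = ∏ x, wB (p x) (ω x) := by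
    intro ω
    rw [← Set.univ_pi_singleton ω, Measure.pi_pi]
    exact Finset.prod_congr rfl fun x _ => bern_singleton _ _
  have hS : S = ⋃ ω ∈ Finset.univ.filter (· ∈ S), ({ω} : Set (K → Bool)) := by
    ext ω; simp
  conv_lhs => rw [hS]
  rw [measure_biUnion_finset ?_ ?_]
  · rw [← Finset.sum_filter]
    exact Finset.sum_congr rfl fun ω _ => hsing ω
  · intro a _ b _ hab
    simp only [Function.onFun]
    exact Set.disjoint_singleton.mpr hab
  · exact fun b _ => measurableSet_singleton b

lemma sum_filter_pi {ι : Type*} [Fintype ι] [DecidableEq ι] {T : ι → Type*}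
    [∀ j, Fintype (T j)] [∀ j, DecidableEq (T j)]
    (g : ∀ j, T j → ℝ≥0∞) (Q : ∀ j, T j → Prop) [∀ j, DecidablePred (Q j)] :
    ∑ f ∈ Finset.univ.filter (fun f : ∀ j, T j => ∀ j, Q j (f j)), ∏ j, g j (f j)
      = ∏ j, ∑ v ∈ Finset.univ.filter (Q j), g j v := by
  have h2 : Finset.univ.filter (fun f : ∀ j, T j => ∀ j, Q j (f j))
      = Fintype.piFinset (fun j => Finset.univ.filter (Q j)) := by
    ext f; simp [Fintype.mem_piFinset]
  rw [h2, Finset.prod_univ_sum]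

lemma sum_pi_one {ι : Type*} [Fintype ι] [DecidableEq ι]
    (g : ι → Bool → ℝ≥0∞) (hg : ∀ j, g j true + g j false = 1) :
    (∑ f : ι → Bool, ∏ j, g j (f j)) = 1 := by
  have := Finset.prod_univ_sum (fun _ : ι => (Finset.univ : Finset Bool)) (fun j b => g j b)
  rw [Fintype.piFinset_univ] at this
  rw [← this]
  refine Finset.prod_eq_one fun j _ => ?_
  rw [Fintype.sum_bool]; exact hg j

section Blk
variable {n : ℕ}

def blkK (i : Fin n) : Finset (Fin n) ⊕ Fin n × Finset (Fin n) → Option (Fin n)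
  | .inl t =>
    if h : i ∈ t ∧ t.card = 2 then
      some ((t.erase i).min' (by
        rw [← Finset.card_pos, Finset.card_erase_of_mem h.1, h.2]; decide))
    else none
  | .inr (j, _) => some j

@[simp] lemma blkK_inr (i j : Fin n) (s : Finset (Fin n)) : blkK i (.inr (j, s)) = some j := rfl

lemma pair_erase {i j : Fin n} (hj : j ≠ i) : ({i, j} : Finset (Fin n)).erase i = {j} := by
  apply Finset.erase_insert
  simp [hj.symm]

lemma blkK_pair {i j : Fin n} (hj : j ≠ i) : blkK i (.inl {i, j}) = some j := by
  have hi : i ∈ ({i, j} : Finset (Fin n)) := Finset.mem_insert_self _ _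
  have hc : ({i, j} : Finset (Fin n)).card = 2 := Finset.card_pair (Ne.symm hj)
  simp only [blkK, dif_pos (And.intro hi hc)]
  congr 1
  have hm := Finset.min'_mem (({i, j} : Finset (Fin n)).erase i)
    (by rw [← Finset.card_pos, Finset.card_erase_of_mem hi, hc]; decide)
  have h1 := Finset.mem_of_mem_erase hm
  have h2 := (Finset.mem_erase.mp hm).1
  rcases Finset.mem_insert.mp h1 with h | h
  · exact absurd h h2
  · exact Finset.mem_singleton.mp h

lemma blkK_inl_ne_some_self (i : Fin n) (t : Finset (Fin n)) : blkK i (.inl t) ≠ some i := by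
  simp only [blkK]
  split
  · next h =>
    intro hc
    have hm := Finset.min'_mem (t.erase i)
      (by rw [← Finset.card_pos, Finset.card_erase_of_mem h.1, h.2]; decide)
    rw [Option.some.injEq] at hc
    exact (Finset.mem_erase.mp hm).1 hc
  · simp

lemma blkK_eq_some_self {i : Fin n} {x} (hx : blkK i x = some i) :
    ∃ s, x = .inr (i, s) := by
  match x with
  | .inl t => exact absurd hx (blkK_inl_ne_some_self i t)
  | .inr (j, s) =>
    rw [blkK_inr, Option.some.injEq] at hx
    exact ⟨s, by rw [hx]⟩

lemma blkK_eq_some {i j : Fin n} (hj : j ≠ i) {x} (hx : blkK i x = some j) :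
    x = .inl {i, j} ∨ ∃ s, x = .inr (j, s) := by
  match x with
  | .inl t =>
    left
    simp only [blkK] at hx
    split at hx
    · next h =>
      rw [Option.some.injEq] at hx
      have hm := Finset.min'_mem (t.erase i)
        (by rw [← Finset.card_pos, Finset.card_erase_of_mem h.1, h.2]; decide)
      have hj' : j ∈ t.erase i := hx ▸ hm
      have h1 : (t.erase i).card = 1 := by
        rw [Finset.card_erase_of_mem h.1, h.2]
      obtain ⟨a, ha⟩ := Finset.card_eq_one.mp h1
      have haj : a = j := by
        have := ha ▸ hj'
        exact (Finset.mem_singleton.mp this).symm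
      have ht : t = insert i (t.erase i) := (Finset.insert_erase h.1).symm
      rw [ht, ha, haj]
    · exact absurd hx (by simp)
  | .inr (j', s) =>
    right
    rw [blkK_inr, Option.some.injEq] at hx
    exact ⟨s, by rw [hx]⟩

abbrev Fib (i : Fin n) (jo : Option (Fin n)) :=
  {x : Finset (Fin n) ⊕ Fin n × Finset (Fin n) // blkK i x = jo}

def blockEquiv (i : Fin n) :
    ((Finset (Fin n) ⊕ Fin n × Finset (Fin n)) → Bool) ≃ (∀ jo : Option (Fin n), Fib i jo → Bool) where
  toFun ω := fun _ y => ω y.1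
  invFun f := fun x => f (blkK i x) ⟨x, rfl⟩
  left_inv ω := rfl
  right_inv f := by
    funext jo y
    obtain ⟨x, hx⟩ := y
    subst hx
    rfl

lemma blockEquiv_symm_apply (i : Fin n) (f : ∀ jo : Option (Fin n), Fib i jo → Bool)
    (jo : Option (Fin n)) (x) (hx : blkK i x = jo) :
    (blockEquiv i).symm f x = f jo ⟨x, hx⟩ := by
  subst hx; rfl

end Blk


section Deg
variable {n : ℕ}

def Xp (Z : ℕ) (ω : StarOmega n) (i j : Fin n) : Prop :=
  ω (.inl {i, j}) = true ∨
    ∃ s : Finset (Fin n), s.card = Z ∧ j ∉ s ∧ i ∈ s ∧ ω (.inr (j, s)) = true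

lemma edge_iff {Z : ℕ} {ω : StarOmega n} {i j : Fin n}
    (hstar : ∀ s : Finset (Fin n), s.card = Z → i ∉ s → ω (.inr (i, s)) = false) :
    (starEdge Z ω i j = true) ↔ Xp Z ω i j := by
  simp only [starEdge, Bool.or_eq_true, decide_eq_true_eq, Xp]
  constructor
  · rintro ((h | ⟨s, hc, hi, hjs, ht⟩) | h)
    · exact Or.inl h
    · rw [hstar s hc hi] at ht; exact absurd ht (by simp)
    · exact Or.inr h
  · rintro (h | h)
    · exact Or.inl (Or.inl h)
    · exact Or.inr h

open scoped Classical in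
lemma degree_eq_iff {Z : ℕ} {i : Fin n} {d : ℕ} (hd : d < Z) (ω : StarOmega n) :
    starDegree Z ω i = d ↔
      ((∀ s : Finset (Fin n), s.card = Z → i ∉ s → ω (.inr (i, s)) = false) ∧
       (Finset.univ.filter fun j => j ≠ i ∧ Xp Z ω i j).card = d) := by
  constructor
  · intro h
    have hstar : ∀ s : Finset (Fin n), s.card = Z → i ∉ s → ω (.inr (i, s)) = false := by
      by_contra hc
      push_neg at hc
      obtain ⟨s, hcard, his, htrue⟩ := hc
      have hsub : s ⊆ Finset.univ.filter fun j => j ≠ i ∧ starEdge Z ω i j = true := by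
        intro j hj
        simp only [Finset.mem_filter, Finset.mem_univ, true_and]
        refine ⟨fun hji => his (hji ▸ hj), ?_⟩
        simp only [starEdge, Bool.or_eq_true, decide_eq_true_eq]
        exact Or.inl (Or.inr ⟨s, hcard, his, hj, Bool.ne_false_iff.mp htrue⟩)
      have hle := Finset.card_le_card hsub
      rw [hcard] at hle
      unfold starDegree at h
      omega
    refine ⟨hstar, ?_⟩
    rw [← h]
    unfold starDegree
    apply congrArg Finset.card
    ext j
    simp only [Finset.mem_filter, Finset.mem_univ, true_and]
    exact and_congr_right fun _ => (edge_iff hstar).symm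
  · rintro ⟨hstar, hcount⟩
    unfold starDegree
    rw [← hcount]
    apply congrArg Finset.card
    ext j
    simp only [Finset.mem_filter, Finset.mem_univ, true_and]
    exact and_congr_right fun _ => edge_iff hstar

def extractS : Finset (Fin n) ⊕ Fin n × Finset (Fin n) → Finset (Fin n)
  | .inl _ => ∅
  | .inr (_, s) => s

open scoped Classical in
lemma card_istars (Z : ℕ) (i : Fin n) :
    (Finset.univ.filter fun y : Fib i (some i) =>
        ∃ s : Finset (Fin n), y.1 = Sum.inr (i, s) ∧ s.card = Z ∧ i ∉ s).card
      = (n - 1).choose Z := by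
  have h : (Finset.univ.filter fun y : Fib i (some i) =>
        ∃ s : Finset (Fin n), y.1 = Sum.inr (i, s) ∧ s.card = Z ∧ i ∉ s).card
      = (Finset.powersetCard Z (Finset.univ.erase i)).card := by
    apply Finset.card_nbij' (fun y => extractS y.1)
      (fun s => (⟨Sum.inr (i, s), rfl⟩ : Fib i (some i)))
    · intro y hy
      simp only [Finset.mem_coe] at hy ⊢
      simp only [Finset.mem_filter] at hy
      obtain ⟨-, s, hy1, hc, hn⟩ := hy
      rw [hy1]
      simp only [extractS]
      rw [Finset.mem_powersetCard]
      exact ⟨Finset.subset_erase.mpr ⟨Finset.subset_univ s, hn⟩, hc⟩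
    · intro s hs
      simp only [Finset.mem_coe] at hs ⊢
      rw [Finset.mem_powersetCard] at hs
      obtain ⟨hsub, hc⟩ := hs
      simp only [Finset.mem_filter, Finset.mem_univ, true_and]
      exact ⟨s, rfl, hc, (Finset.subset_erase.mp hsub).2⟩
    · intro y hy
      rw [Finset.mem_coe] at hy
      simp only [Finset.mem_filter] at hy
      obtain ⟨-, s, hy1, -, -⟩ := hy
      apply Subtype.ext
      beta_reduce
      rw [hy1]
      rfl
    · intro s hs
      rfl
  rw [h, Finset.card_powersetCard, Finset.card_erase_of_mem (Finset.mem_univ i),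
    Finset.card_univ, Fintype.card_fin]

open scoped Classical in
lemma card_jstars (Z : ℕ) {i j : Fin n} (hij : j ≠ i) (hZ : 1 ≤ Z) :
    (Finset.univ.filter fun y : Fib i (some j) =>
        ∃ s : Finset (Fin n), y.1 = Sum.inr (j, s) ∧ s.card = Z ∧ j ∉ s ∧ i ∈ s).card
      = (n - 2).choose (Z - 1) := by
  have h : (Finset.univ.filter fun y : Fib i (some j) =>
        ∃ s : Finset (Fin n), y.1 = Sum.inr (j, s) ∧ s.card = Z ∧ j ∉ s ∧ i ∈ s).card
      = (Finset.powersetCard (Z - 1) ((Finset.univ.erase i).erase j)).card := by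
    apply Finset.card_nbij' (fun y => (extractS y.1).erase i)
      (fun u => (⟨Sum.inr (j, insert i u), rfl⟩ : Fib i (some j)))
    · intro y hy
      simp only [Finset.mem_coe] at hy ⊢
      simp only [Finset.mem_filter] at hy
      obtain ⟨-, s, hy1, hc, hjn, him⟩ := hy
      rw [hy1]
      simp only [extractS]
      rw [Finset.mem_powersetCard]
      constructor
      · intro x hx
        rw [Finset.mem_erase] at hx
        rw [Finset.mem_erase, Finset.mem_erase]
        exact ⟨fun hxj => hjn (hxj ▸ hx.2), hx.1, Finset.mem_univ x⟩
      · rw [Finset.card_erase_of_mem him, hc]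
    · intro u hu
      simp only [Finset.mem_coe] at hu ⊢
      rw [Finset.mem_powersetCard] at hu
      obtain ⟨hsub, hc⟩ := hu
      have hiu : i ∉ u := by
        intro hiu
        exact (Finset.mem_erase.mp ((Finset.mem_erase.mp (hsub hiu)).2)).1 rfl
      have hju : j ∉ u := by
        intro hju
        exact (Finset.mem_erase.mp (hsub hju)).1 rfl
      simp only [Finset.mem_filter, Finset.mem_univ, true_and]
      refine ⟨insert i u, rfl, ?_, ?_, Finset.mem_insert_self i u⟩
      · rw [Finset.card_insert_of_notMem hiu, hc]
        omega
      · rw [Finset.mem_insert]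
        rintro (h | h)
        · exact hij h
        · exact hju h
    · intro y hy
      rw [Finset.mem_coe] at hy
      simp only [Finset.mem_filter] at hy
      obtain ⟨-, s, hy1, -, -, him⟩ := hy
      apply Subtype.ext
      beta_reduce
      rw [hy1]
      simp only [extractS]
      rw [Finset.insert_erase him]
    · intro u hu
      rw [Finset.mem_coe] at hu
      rw [Finset.mem_powersetCard] at hu
      have hiu : i ∉ u := by
        intro hiu
        exact (Finset.mem_erase.mp ((Finset.mem_erase.mp (hu.1 hiu)).2)).1 rfl
      simp only [extractS]
      exact Finset.erase_insert hiu
  rw [h, Finset.card_powersetCard, Finset.card_erase_of_mem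
      (Finset.mem_erase.mpr ⟨hij, Finset.mem_univ j⟩),
    Finset.card_erase_of_mem (Finset.mem_univ i), Finset.card_univ, Fintype.card_fin,
    Nat.sub_sub]

open scoped Classical in
lemma card_pattern {J : Type*} [Fintype J] [DecidableEq J] (d : ℕ) :
    (Finset.univ.filter fun c : J → Bool =>
        (Finset.univ.filter fun j => c j = true).card = d).card
      = (Fintype.card J).choose d := by
  have h : (Finset.univ.filter fun c : J → Bool =>
        (Finset.univ.filter fun j => c j = true).card = d).card
      = (Finset.powersetCard d (Finset.univ : Finset J)).card := by
    apply Finset.card_nbij' (fun c => Finset.univ.filter fun j => c j = true)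
      (fun t => fun j => decide (j ∈ t))
    · intro c hc
      simp only [Finset.mem_coe] at hc ⊢
      simp only [Finset.mem_filter, Finset.mem_univ, true_and] at hc
      rw [Finset.mem_powersetCard]
      exact ⟨Finset.subset_univ _, hc⟩
    · intro t ht
      simp only [Finset.mem_coe] at ht ⊢
      rw [Finset.mem_powersetCard] at ht
      simp only [Finset.mem_filter, Finset.mem_univ, true_and]
      rw [← ht.2]
      apply congrArg Finset.card
      ext j
      simp
    · intro c hc
      funext j
      simp
    · intro t ht
      ext j
      simp
  rw [h, Finset.card_powersetCard, Finset.card_univ]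

end Deg

section Blocks
variable {n : ℕ}

def pK (βL βZ : ℝ) : Finset (Fin n) ⊕ Fin n × Finset (Fin n) → ℝ :=
  Sum.elim (fun _ => βL) (fun _ => βZ)

lemma pK_mem {βL βZ : ℝ} (hβL : βL ∈ Set.Icc (0:ℝ) 1) (hβZ : βZ ∈ Set.Icc (0:ℝ) 1)
    (x : Finset (Fin n) ⊕ Fin n × Finset (Fin n)) : pK βL βZ x ∈ Set.Icc (0:ℝ) 1 := by
  cases x
  · exact hβL
  · exact hβZ

noncomputable def Pblock (βL βZ : ℝ) (i : Fin n) (jo : Option (Fin n))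
    (v : Fib i jo → Bool) : ℝ≥0∞ :=
  ∏ y, wB (pK βL βZ y.1) (v y)

lemma block_total {βL βZ : ℝ} (hβL : βL ∈ Set.Icc (0:ℝ) 1) (hβZ : βZ ∈ Set.Icc (0:ℝ) 1)
    (i : Fin n) (jo : Option (Fin n)) :
    ∑ v : Fib i jo → Bool, Pblock βL βZ i jo v = 1 :=
  sum_pi_one _ (fun y => wB_total (pK_mem hβL hβZ y.1))

def Yp (Z : ℕ) (i j : Fin n) (v : Fib i (some j) → Bool) : Prop :=
  (∃ h : blkK i (Sum.inl {i, j}) = some j, v ⟨Sum.inl {i, j}, h⟩ = true) ∨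
    ∃ s : Finset (Fin n), s.card = Z ∧ j ∉ s ∧ i ∈ s ∧ v ⟨Sum.inr (j, s), rfl⟩ = true

open scoped Classical in
lemma block_i {βL βZ : ℝ} (hβL : βL ∈ Set.Icc (0:ℝ) 1) (hβZ : βZ ∈ Set.Icc (0:ℝ) 1)
    (i : Fin n) (Z : ℕ) :
    ∑ v ∈ Finset.univ.filter (fun v : Fib i (some i) → Bool =>
        ∀ s : Finset (Fin n), s.card = Z → i ∉ s → v ⟨Sum.inr (i, s), rfl⟩ = false),
      Pblock βL βZ i (some i) v
    = ENNReal.ofReal (1 - βZ) ^ ((n - 1).choose Z) := by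
  have hiff : ∀ v : Fib i (some i) → Bool,
      (∀ s : Finset (Fin n), s.card = Z → i ∉ s → v ⟨Sum.inr (i, s), rfl⟩ = false) ↔
      (∀ y : Fib i (some i),
        (∃ s : Finset (Fin n), y.1 = Sum.inr (i, s) ∧ s.card = Z ∧ i ∉ s) → v y = false) := by
    intro v
    constructor
    · rintro h y ⟨s, hy, hc, hn⟩
      have hyy : y = ⟨Sum.inr (i, s), by rw [← hy]; exact y.2⟩ := Subtype.ext hy
      rw [hyy]
      exact h s hc hn
    · intro h s hc hn
      exact h ⟨Sum.inr (i, s), rfl⟩ ⟨s, rfl, hc, hn⟩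
  rw [Finset.filter_congr fun v _ => hiff v]
  unfold Pblock
  refine Eq.trans (sum_filter_pi (fun y : Fib i (some i) => wB (pK βL βZ y.1))
    (fun (y : Fib i (some i)) (b : Bool) =>
      (∃ s : Finset (Fin n), y.1 = Sum.inr (i, s) ∧ s.card = Z ∧ i ∉ s) → b = false)) ?_
  have hfac : ∀ y : Fib i (some i),
      (∑ b ∈ Finset.univ.filter
          (fun b : Bool =>
            (∃ s : Finset (Fin n), y.1 = Sum.inr (i, s) ∧ s.card = Z ∧ i ∉ s) → b = false),
        wB (pK βL βZ y.1) b)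
      = if (∃ s : Finset (Fin n), y.1 = Sum.inr (i, s) ∧ s.card = Z ∧ i ∉ s)
          then ENNReal.ofReal (1 - βZ) else 1 := by
    intro y
    by_cases hy : ∃ s : Finset (Fin n), y.1 = Sum.inr (i, s) ∧ s.card = Z ∧ i ∉ s
    · rw [if_pos hy]
      have hfil : Finset.univ.filter
          (fun b : Bool =>
            (∃ s : Finset (Fin n), y.1 = Sum.inr (i, s) ∧ s.card = Z ∧ i ∉ s) → b = false)
          = {false} := by
        ext b; cases b <;> simp [hy]
      rw [hfil, Finset.sum_singleton, wB_false]
      obtain ⟨s, hy1, -, -⟩ := hy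
      rw [hy1]
      rfl
    · rw [if_neg hy]
      have hfil : Finset.univ.filter
          (fun b : Bool =>
            (∃ s : Finset (Fin n), y.1 = Sum.inr (i, s) ∧ s.card = Z ∧ i ∉ s) → b = false)
          = Finset.univ := by
        ext b; simp [hy]
      rw [hfil, Fintype.sum_bool]
      exact wB_total (pK_mem hβL hβZ y.1)
  rw [Finset.prod_congr rfl fun y _ => hfac y, Finset.prod_ite, Finset.prod_const,
    Finset.prod_const, one_pow, mul_one, card_istars]

open scoped Classical in
lemma block_j_false {βL βZ : ℝ} (hβL : βL ∈ Set.Icc (0:ℝ) 1) (hβZ : βZ ∈ Set.Icc (0:ℝ) 1)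
    {i j : Fin n} (hij : j ≠ i) (Z : ℕ) (hZ : 1 ≤ Z) :
    ∑ v ∈ Finset.univ.filter (fun v : Fib i (some j) → Bool => ¬ Yp Z i j v),
      Pblock βL βZ i (some j) v
    = ENNReal.ofReal ((1 - βL) * (1 - βZ) ^ ((n - 2).choose (Z - 1))) := by
  have hiff : ∀ v : Fib i (some j) → Bool, (¬ Yp Z i j v) ↔
      (∀ y : Fib i (some j),
        ((y.1 = Sum.inl {i, j}) ∨
          (∃ s : Finset (Fin n), y.1 = Sum.inr (j, s) ∧ s.card = Z ∧ j ∉ s ∧ i ∈ s)) →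
        v y = false) := by
    intro v
    unfold Yp
    constructor
    · intro h y hy
      rcases hy with hy | ⟨s, hy, hc, hjn, him⟩
      · have hyy : y = ⟨Sum.inl {i, j}, by rw [← hy]; exact y.2⟩ := Subtype.ext hy
        rw [hyy]
        by_contra hv
        exact h (Or.inl ⟨by rw [← hy]; exact y.2, Bool.ne_false_iff.mp hv⟩)
      · have hyy : y = ⟨Sum.inr (j, s), by rw [← hy]; exact y.2⟩ := Subtype.ext hy
        rw [hyy]
        by_contra hv
        exact h (Or.inr ⟨s, hc, hjn, him, Bool.ne_false_iff.mp hv⟩)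
    · intro h hY
      rcases hY with ⟨hb, hv⟩ | ⟨s, hc, hjn, him, hv⟩
      · rw [h ⟨Sum.inl {i, j}, hb⟩ (Or.inl rfl)] at hv
        exact absurd hv (by simp)
      · rw [h ⟨Sum.inr (j, s), rfl⟩ (Or.inr ⟨s, rfl, hc, hjn, him⟩)] at hv
        exact absurd hv (by simp)
  rw [Finset.filter_congr fun v _ => hiff v]
  unfold Pblock
  refine Eq.trans (sum_filter_pi (fun y : Fib i (some j) => wB (pK βL βZ y.1))
    (fun (y : Fib i (some j)) (b : Bool) =>
      ((y.1 = Sum.inl {i, j}) ∨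
        (∃ s : Finset (Fin n), y.1 = Sum.inr (j, s) ∧ s.card = Z ∧ j ∉ s ∧ i ∈ s)) → b = false)) ?_
  have hfac : ∀ y : Fib i (some j),
      (∑ b ∈ Finset.univ.filter
          (fun b : Bool =>
            ((y.1 = Sum.inl {i, j}) ∨
              (∃ s : Finset (Fin n), y.1 = Sum.inr (j, s) ∧ s.card = Z ∧ j ∉ s ∧ i ∈ s)) →
            b = false),
        wB (pK βL βZ y.1) b)
      = if y.1 = Sum.inl {i, j} then ENNReal.ofReal (1 - βL)
        else if (∃ s : Finset (Fin n), y.1 = Sum.inr (j, s) ∧ s.card = Z ∧ j ∉ s ∧ i ∈ s)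
          then ENNReal.ofReal (1 - βZ) else 1 := by
    intro y
    by_cases h1 : y.1 = Sum.inl {i, j}
    · rw [if_pos h1]
      have hfil : Finset.univ.filter
          (fun b : Bool =>
            ((y.1 = Sum.inl {i, j}) ∨
              (∃ s : Finset (Fin n), y.1 = Sum.inr (j, s) ∧ s.card = Z ∧ j ∉ s ∧ i ∈ s)) →
            b = false) = {false} := by
        ext b; cases b <;> simp [h1]
      rw [hfil, Finset.sum_singleton, wB_false, h1]
      rfl
    · rw [if_neg h1]
      by_cases h2 : ∃ s : Finset (Fin n), y.1 = Sum.inr (j, s) ∧ s.card = Z ∧ j ∉ s ∧ i ∈ s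
      · rw [if_pos h2]
        have hfil : Finset.univ.filter
            (fun b : Bool =>
              ((y.1 = Sum.inl {i, j}) ∨
                (∃ s : Finset (Fin n), y.1 = Sum.inr (j, s) ∧ s.card = Z ∧ j ∉ s ∧ i ∈ s)) →
              b = false) = {false} := by
          ext b; cases b <;> simp [h1, h2]
        rw [hfil, Finset.sum_singleton, wB_false]
        obtain ⟨s, hy1, -, -, -⟩ := h2
        rw [hy1]
        rfl
      · rw [if_neg h2]
        have hfil : Finset.univ.filter
            (fun b : Bool =>
              ((y.1 = Sum.inl {i, j}) ∨
                (∃ s : Finset (Fin n), y.1 = Sum.inr (j, s) ∧ s.card = Z ∧ j ∉ s ∧ i ∈ s)) →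
              b = false) = Finset.univ := by
          ext b; simp [h1, h2]
        rw [hfil, Fintype.sum_bool]
        exact wB_total (pK_mem hβL hβZ y.1)
  rw [Finset.prod_congr rfl fun y _ => hfac y]
  have hy₀ : blkK i (Sum.inl {i, j}) = some j := blkK_pair hij
  rw [← Finset.mul_prod_erase Finset.univ _ (Finset.mem_univ (⟨Sum.inl {i, j}, hy₀⟩ : Fib i (some j)))]
  have herase : ∀ y ∈ Finset.univ.erase (⟨Sum.inl {i, j}, hy₀⟩ : Fib i (some j)),
      (if y.1 = Sum.inl {i, j} then ENNReal.ofReal (1 - βL)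
        else if (∃ s : Finset (Fin n), y.1 = Sum.inr (j, s) ∧ s.card = Z ∧ j ∉ s ∧ i ∈ s)
          then ENNReal.ofReal (1 - βZ) else 1)
      = if (∃ s : Finset (Fin n), y.1 = Sum.inr (j, s) ∧ s.card = Z ∧ j ∉ s ∧ i ∈ s)
          then ENNReal.ofReal (1 - βZ) else 1 := by
    intro y hy
    exact if_neg (fun hc => (Finset.mem_erase.mp hy).1 (Subtype.ext hc))
  rw [Finset.prod_congr rfl herase]
  rw [Finset.prod_ite, Finset.prod_const, Finset.prod_const, one_pow, mul_one]
  rw [Finset.filter_erase]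
  rw [Finset.erase_eq_of_notMem (by simp)]
  rw [card_jstars Z hij hZ]
  rw [if_pos rfl]
  rw [← ENNReal.ofReal_pow (by linarith [hβZ.2]), ← ENNReal.ofReal_mul (by linarith [hβL.2])]

end Blocks

open scoped Classical in
def Qblk {n : ℕ} (Z : ℕ) (i : Fin n) (c : {j : Fin n // j ≠ i} → Bool) :
    ∀ jo : Option (Fin n), (Fib i jo → Bool) → Prop
  | none => fun _ => True
  | some j => fun v =>
      if hij : j = i then
        (∀ s : Finset (Fin n), s.card = Z → i ∉ s → v ⟨Sum.inr (j, s), rfl⟩ = false)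
      else (Yp Z i j v ↔ c ⟨j, hij⟩ = true)

lemma card_J {n : ℕ} (i : Fin n) : Fintype.card {j : Fin n // j ≠ i} = n - 1 := by
  simp [Fintype.card_subtype_compl, Fintype.card_subtype_eq]

set_option maxHeartbeats 2000000 in
/-- degree distribution in the links and `Z`-stars SUGM.  For `n > Z ≥ 2`,
`βL, βZ ∈ [0,1]`, every node `i` and every `d` with `0 ≤ d < Z`, the probability that `i`
has degree exactly `d` equals
`C(n-1,d) ⬝ π^d ⬝ (1-π)^(n-1-d) ⬝ (1-βZ)^(C(n-1,Z))` with
`π = βL + (1-βL)(1-(1-βZ)^(C(n-2,Z-1)))`. -/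
theorem stmt16 (n Z : ℕ) (hZ : 2 ≤ Z) (hnZ : Z < n) (βL βZ : ℝ)
    (hβL : βL ∈ Set.Icc (0 : ℝ) 1) (hβZ : βZ ∈ Set.Icc (0 : ℝ) 1)
    (i : Fin n) (d : ℕ) (hd : d < Z) :
    starSugm n βL βZ {ω | starDegree Z ω i = d} =
      ENNReal.ofReal
        (((n - 1).choose d : ℝ) *
          (βL + (1 - βL) * (1 - (1 - βZ) ^ ((n - 2).choose (Z - 1)))) ^ d *
          (1 - (βL + (1 - βL) * (1 - (1 - βZ) ^ ((n - 2).choose (Z - 1))))) ^ (n - 1 - d) *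
          (1 - βZ) ^ ((n - 1).choose Z)) := by
  classical
  have hβL0 := hβL.1
  have hβL1 := hβL.2
  have hβZ0 := hβZ.1
  have hβZ1 := hβZ.2
  set M := (n - 2).choose (Z - 1) with hM
  set π := βL + (1 - βL) * (1 - (1 - βZ) ^ M) with hπdef
  have hq0 : (0:ℝ) ≤ (1 - βZ) ^ M := pow_nonneg (by linarith) M
  have hq1 : (1 - βZ) ^ M ≤ 1 := pow_le_one₀ (by linarith) (by linarith)
  have hπ0 : 0 ≤ π := by
    have h1 : 0 ≤ (1 - βL) * (1 - (1 - βZ) ^ M) := mul_nonneg (by linarith) (by linarith)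
    rw [hπdef]; linarith
  have hkey : (1 - βL) * (1 - βZ) ^ M = 1 - π := by rw [hπdef]; ring
  have hπ1 : π ≤ 1 := by
    have h1 : 0 ≤ (1 - βL) * (1 - βZ) ^ M := mul_nonneg (by linarith) hq0
    linarith [hkey]
  -- the probability space as a product of Bernoullis
  have hμ : starSugm n βL βZ = Measure.pi (fun x => bern (pK βL βZ x)) := by
    unfold starSugm
    congr 1
    funext x
    cases x <;> rfl
  rw [hμ, measure_pi_bern_apply]
  -- reindex by blocks
  rw [← Equiv.sum_comp (blockEquiv i).symm
      (fun ω => if ω ∈ {ω : StarOmega n | starDegree Z ω i = d}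
        then ∏ x, wB (pK βL βZ x) (ω x) else 0)]
  -- rewrite each summand
  have hprod : ∀ f : ∀ jo : Option (Fin n), Fib i jo → Bool,
      (∏ x, wB (pK βL βZ x) ((blockEquiv i).symm f x)) = ∏ jo, Pblock βL βZ i jo (f jo) := by
    intro f
    rw [← Equiv.prod_comp (Equiv.sigmaFiberEquiv (blkK i))
        (fun x => wB (pK βL βZ x) ((blockEquiv i).symm f x))]
    rw [← Finset.univ_sigma_univ, Finset.prod_sigma]
    refine Finset.prod_congr rfl fun jo _ => Finset.prod_congr rfl fun y _ => ?_
    show wB (pK βL βZ y.1) ((blockEquiv i).symm f y.1) = wB (pK βL βZ y.1) (f jo y)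
    rw [blockEquiv_symm_apply i f jo y.1 y.2]
  have hX : ∀ (f : ∀ jo : Option (Fin n), Fib i jo → Bool) (j : Fin n), j ≠ i →
      (Xp Z ((blockEquiv i).symm f) i j ↔ Yp Z i j (f (some j))) := by
    intro f j hij
    unfold Xp Yp
    apply or_congr
    · rw [blockEquiv_symm_apply i f (some j) (Sum.inl {i, j}) (blkK_pair hij)]
      constructor
      · intro h; exact ⟨blkK_pair hij, h⟩
      · rintro ⟨h', hv⟩; exact hv
    · exact Iff.rfl
  have hcond : ∀ f : ∀ jo : Option (Fin n), Fib i jo → Bool,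
      ((blockEquiv i).symm f ∈ {ω : StarOmega n | starDegree Z ω i = d}) ↔
      ((∀ s : Finset (Fin n), s.card = Z → i ∉ s → f (some i) ⟨Sum.inr (i, s), rfl⟩ = false) ∧
       (Finset.univ.filter fun j : {j : Fin n // j ≠ i} =>
          Yp Z i j.1 (f (some j.1))).card = d) := by
    intro f
    rw [Set.mem_setOf_eq, degree_eq_iff hd]
    apply and_congr
    · exact Iff.rfl
    · have hcards : (Finset.univ.filter fun j : Fin n =>
            j ≠ i ∧ Xp Z ((blockEquiv i).symm f) i j).card
          = (Finset.univ.filter fun j : {j : Fin n // j ≠ i} =>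
              Yp Z i j.1 (f (some j.1))).card := by
        apply Finset.card_bij
          (i := fun j hj => (⟨j, (Finset.mem_filter.mp hj).2.1⟩ : {j : Fin n // j ≠ i}))
        · intro j hj
          obtain ⟨-, hji, hXj⟩ := Finset.mem_filter.mp hj
          simp only [Finset.mem_filter, Finset.mem_univ, true_and]
          exact (hX f j hji).mp hXj
        · intro a ha b hb h
          exact congrArg Subtype.val h
        · intro b hb
          obtain ⟨-, hYb⟩ := Finset.mem_filter.mp hb
          refine ⟨b.1, Finset.mem_filter.mpr ⟨Finset.mem_univ _, b.2, (hX f b.1 b.2).mpr hYb⟩, rfl⟩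
      exact hcards ▸ Iff.rfl
  have hsummand : ∀ f : ∀ jo : Option (Fin n), Fib i jo → Bool,
      (if (blockEquiv i).symm f ∈ {ω : StarOmega n | starDegree Z ω i = d}
        then ∏ x, wB (pK βL βZ x) ((blockEquiv i).symm f x) else 0)
      = ∑ c : {j : Fin n // j ≠ i} → Bool,
          (if ((∀ jo, Qblk Z i c jo (f jo)) ∧
              (Finset.univ.filter fun j : {j : Fin n // j ≠ i} => c j = true).card = d)
            then ∏ jo, Pblock βL βZ i jo (f jo) else 0) := by
    intro f
    rw [if_congr (hcond f) (hprod f) rfl]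
    by_cases hA : ∀ s : Finset (Fin n), s.card = Z → i ∉ s →
        f (some i) ⟨Sum.inr (i, s), rfl⟩ = false
    · rw [Finset.sum_eq_single (fun j : {j : Fin n // j ≠ i} =>
          decide (Yp Z i j.1 (f (some j.1))))]
      · have hQ : ∀ jo, Qblk Z i (fun j : {j : Fin n // j ≠ i} =>
            decide (Yp Z i j.1 (f (some j.1)))) jo (f jo) := by
          intro jo
          match jo with
          | none => trivial
          | some j =>
            simp only [Qblk]
            split
            · next hji => subst hji; exact hA
            · next hji => simp
        have hcardc : (Finset.univ.filter fun j : {j : Fin n // j ≠ i} =>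
              decide (Yp Z i j.1 (f (some j.1))) = true).card
            = (Finset.univ.filter fun j : {j : Fin n // j ≠ i} =>
              Yp Z i j.1 (f (some j.1))).card := by
          apply congrArg
          apply Finset.filter_congr
          intro j _
          simp
        apply if_congr _ rfl rfl
        constructor
        · rintro ⟨-, h⟩; exact ⟨hQ, hcardc.trans h⟩
        · rintro ⟨-, h⟩; exact ⟨hA, hcardc.symm.trans h⟩
      · intro c _ hne
        rw [if_neg]
        rintro ⟨hQ, -⟩
        apply hne
        funext j
        have hj := hQ (some j.1)
        simp only [Qblk, dif_neg j.2, Subtype.coe_eta] at hj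
        by_cases hcj : c j = true
        · rw [hcj]
          exact (decide_eq_true (hj.mpr hcj)).symm
        · have hcj' : c j = false := by
            cases hcjv : c j
            · rfl
            · exact absurd hcjv hcj
          rw [hcj']
          exact (decide_eq_false (fun hY => hcj (hj.mp hY))).symm
      · intro h; exact absurd (Finset.mem_univ _) h
    · rw [if_neg (fun hc => hA hc.1)]
      symm
      apply Finset.sum_eq_zero
      intro c _
      rw [if_neg]
      rintro ⟨hQ, -⟩
      apply hA
      have h := hQ (some i)
      simpa only [Qblk, dif_pos rfl, dite_true] using h
  refine Eq.trans (Finset.sum_congr rfl fun f _ => hsummand f) ?_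
  rw [Finset.sum_comm]
  -- evaluate the inner sum for each pattern c
  have hone : ∀ (c : {j : Fin n // j ≠ i} → Bool) (j : {j : Fin n // j ≠ i}),
      (∑ v ∈ Finset.univ.filter (Qblk Z i c (some j.1)), Pblock βL βZ i (some j.1) v)
      = if c j = true then ENNReal.ofReal π else ENNReal.ofReal (1 - π) := by
    intro c j
    have hfilter : Finset.univ.filter (Qblk Z i c (some j.1))
        = Finset.univ.filter (fun v : Fib i (some j.1) → Bool =>
            Yp Z i j.1 v ↔ c j = true) := by
      apply Finset.filter_congr
      intro v _
      simp only [Qblk, dif_neg j.2]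
    rw [hfilter]
    have hab := Finset.sum_filter_add_sum_filter_not Finset.univ
      (fun v : Fib i (some j.1) → Bool => Yp Z i j.1 v) (Pblock βL βZ i (some j.1))
    rw [block_total hβL hβZ, block_j_false hβL hβZ j.2 Z (by omega)] at hab
    have hofr : ENNReal.ofReal ((1 - βL) * (1 - βZ) ^ ((n - 2).choose (Z - 1)))
        = ENNReal.ofReal (1 - π) := by rw [← hM, hkey]
    rw [hofr] at hab
    by_cases hcj : c j = true
    · rw [if_pos hcj]
      have h1 : Finset.univ.filter (fun v : Fib i (some j.1) → Bool =>
            Yp Z i j.1 v ↔ c j = true)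
          = Finset.univ.filter (fun v : Fib i (some j.1) → Bool => Yp Z i j.1 v) := by
        apply Finset.filter_congr
        intro v _
        simp [hcj]
      rw [h1]
      have heq := ENNReal.eq_sub_of_add_eq ENNReal.ofReal_ne_top hab
      rw [heq, ← ENNReal.ofReal_one, ← ENNReal.ofReal_sub 1 (by linarith)]
      congr 1
      ring
    · rw [if_neg hcj]
      have h1 : Finset.univ.filter (fun v : Fib i (some j.1) → Bool =>
            Yp Z i j.1 v ↔ c j = true)
          = Finset.univ.filter (fun v : Fib i (some j.1) → Bool => ¬ Yp Z i j.1 v) := by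
        apply Finset.filter_congr
        intro v _
        simp [hcj]
      rw [h1, block_j_false hβL hβZ j.2 Z (by omega), ← hM, hkey]
  have hinner : ∀ c : {j : Fin n // j ≠ i} → Bool,
      (∑ f : ∀ jo : Option (Fin n), Fib i jo → Bool,
        if ((∀ jo, Qblk Z i c jo (f jo)) ∧
            (Finset.univ.filter fun j : {j : Fin n // j ≠ i} => c j = true).card = d)
          then ∏ jo, Pblock βL βZ i jo (f jo) else 0)
      = if (Finset.univ.filter fun j : {j : Fin n // j ≠ i} => c j = true).card = d
          then ENNReal.ofReal (1 - βZ) ^ ((n - 1).choose Z) *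
            (ENNReal.ofReal π ^ d * ENNReal.ofReal (1 - π) ^ (n - 1 - d))
          else 0 := by
    intro c
    by_cases hc : (Finset.univ.filter fun j : {j : Fin n // j ≠ i} => c j = true).card = d
    · rw [if_pos hc]
      have hsimp : ∀ f : ∀ jo : Option (Fin n), Fib i jo → Bool,
          (if ((∀ jo, Qblk Z i c jo (f jo)) ∧
              (Finset.univ.filter fun j : {j : Fin n // j ≠ i} => c j = true).card = d)
            then ∏ jo, Pblock βL βZ i jo (f jo) else 0)
          = if (∀ jo, Qblk Z i c jo (f jo))
            then ∏ jo, Pblock βL βZ i jo (f jo) else 0 := by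
        intro f
        exact if_congr (and_iff_left hc) rfl rfl
      rw [Finset.sum_congr rfl fun f _ => hsimp f]
      rw [show (∑ f : ∀ jo : Option (Fin n), Fib i jo → Bool,
          if (∀ jo, Qblk Z i c jo (f jo)) then ∏ jo, Pblock βL βZ i jo (f jo) else 0)
        = ∑ f ∈ Finset.univ.filter (fun f : ∀ jo : Option (Fin n), Fib i jo → Bool =>
            ∀ jo, Qblk Z i c jo (f jo)), ∏ jo, Pblock βL βZ i jo (f jo)
        from (Finset.sum_filter _ _).symm]
      rw [sum_filter_pi (fun jo v => Pblock βL βZ i jo v) (Qblk Z i c)]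
      rw [Fintype.prod_option]
      have hnone : (∑ v ∈ Finset.univ.filter (Qblk Z i c none), Pblock βL βZ i none v) = 1 := by
        rw [show Finset.univ.filter (Qblk Z i c none) = Finset.univ from
          Finset.filter_true_of_mem fun _ _ => trivial]
        exact block_total hβL hβZ i none
      rw [hnone, one_mul]
      rw [← Finset.mul_prod_erase Finset.univ _ (Finset.mem_univ i)]
      have hsomei : (∑ v ∈ Finset.univ.filter (Qblk Z i c (some i)),
          Pblock βL βZ i (some i) v) = ENNReal.ofReal (1 - βZ) ^ ((n - 1).choose Z) := by
        have : Finset.univ.filter (Qblk Z i c (some i))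
            = Finset.univ.filter (fun v : Fib i (some i) → Bool =>
                ∀ s : Finset (Fin n), s.card = Z → i ∉ s → v ⟨Sum.inr (i, s), rfl⟩ = false) := by
          apply Finset.filter_congr
          intro v _
          simp only [Qblk, dif_pos]
        rw [this]
        exact block_i hβL hβZ i Z
      rw [hsomei]
      congr 1
      rw [Finset.prod_subtype (Finset.univ.erase i)
        (p := fun j : Fin n => j ≠ i) (by intro x; simp)
        (fun j => ∑ v ∈ Finset.univ.filter (Qblk Z i c (some j)), Pblock βL βZ i (some j) v)]
      rw [Finset.prod_congr rfl fun j _ => hone c j]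
      rw [Finset.prod_ite, Finset.prod_const, Finset.prod_const, hc]
      have hcc := Finset.card_filter_add_card_filter_not
        (s := (Finset.univ : Finset {j : Fin n // j ≠ i}))
        (fun j => c j = true)
      rw [Finset.card_univ, card_J i, hc] at hcc
      rw [show (Finset.univ.filter fun j : {j : Fin n // j ≠ i} => ¬ c j = true).card
          = n - 1 - d by omega]
    · rw [if_neg hc]
      apply Finset.sum_eq_zero
      intro f _
      exact if_neg (fun h => hc h.2)
  rw [Finset.sum_congr rfl fun c _ => hinner c]
  rw [← Finset.sum_filter, Finset.sum_const]
  have hcp : (Finset.univ.filter fun c : {j : Fin n // j ≠ i} → Bool =>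
      (Finset.univ.filter fun j => c j = true).card = d).card = (n - 1).choose d := by
    rw [card_pattern d, card_J i]
  rw [hcp, nsmul_eq_mul]
  -- final arithmetic
  have h1π : (0:ℝ) ≤ 1 - π := by linarith
  rw [ENNReal.ofReal_mul
      (mul_nonneg (mul_nonneg (Nat.cast_nonneg _) (pow_nonneg hπ0 d)) (pow_nonneg h1π _)),
    ENNReal.ofReal_mul (mul_nonneg (Nat.cast_nonneg _) (pow_nonneg hπ0 d)),
    ENNReal.ofReal_mul (Nat.cast_nonneg _)]
  rw [ENNReal.ofReal_pow hπ0, ENNReal.ofReal_pow h1π,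
    ENNReal.ofReal_pow (by linarith : (0:ℝ) ≤ 1 - βZ), ENNReal.ofReal_natCast]
  ring
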